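/- Let d ≥ 2 and z ≥ 3. Then ∑_{v > z, v | d^∞} 1/v ≪_d (log z)^{ω(d)}/z, i.e., there is a constant C depending only on d such that the sum over integers v > z with all prime factors dividing d of 1/v is at most C(log z)^{ω(d)}/z. -/

import Mathlib

open scoped Classical

open Finset

lemma one_le_log (z : ℝ) (hz : 3 ≤ z) : 1 ≤ Real.log z := by
  have h1 : Real.exp 1 ≤ z := by
    have := Real.exp_one_lt_d9
    linarith
  calc (1:ℝ) = Real.log (Real.exp 1) := (Real.log_exp 1).symm
  _ ≤ Real.log z := Real.log_le_log (Real.exp_pos 1) h1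

lemma count_smooth (d : ℕ) (hd : 2 ≤ d) (n : ℕ) :
    ((Finset.Icc 1 n).filter (fun v => ∀ q : ℕ, q.Prime → q ∣ v → q ∣ d)).card
      ≤ (Nat.log 2 n + 1) ^ d.primeFactors.card := by
  classical
  have hcard : ((d.primeFactors.pi fun _ => Finset.range (Nat.log 2 n + 1))).card
      = (Nat.log 2 n + 1) ^ d.primeFactors.card := by
    rw [Finset.card_pi]
    simp
  rw [← hcard]
  have key : ∀ v ∈ (Finset.Icc 1 n).filter
      (fun v => ∀ q : ℕ, q.Prime → q ∣ v → q ∣ d),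
      v = ∏ p ∈ d.primeFactors, p ^ v.factorization p := by
    intro v hv
    simp only [Finset.mem_filter, Finset.mem_Icc] at hv
    obtain ⟨⟨hv1, hvn⟩, hsm⟩ := hv
    have hsupp : v.factorization.support ⊆ d.primeFactors := by
      intro q hq
      rw [Nat.support_factorization] at hq
      have hqp := Nat.prime_of_mem_primeFactors hq
      exact Nat.mem_primeFactors.mpr ⟨hqp, hsm q hqp (Nat.dvd_of_mem_primeFactors hq), by omega⟩
    conv_lhs => rw [← Nat.factorization_prod_pow_eq_self (show v ≠ 0 by omega)]
    exact Finsupp.prod_of_support_subset _ hsupp _ (fun p _ => pow_zero p)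
  apply Finset.card_le_card_of_injOn (fun v => fun p _ => v.factorization p)
  · intro v hv
    have hv' := hv
    simp only [Finset.mem_coe, Finset.mem_filter, Finset.mem_Icc] at hv'
    obtain ⟨⟨hv1, hvn⟩, hsm⟩ := hv'
    rw [Finset.mem_coe, Finset.mem_pi]
    intro p hp
    rw [Finset.mem_range, Nat.lt_succ_iff]
    have hpprime : Nat.Prime p := Nat.prime_of_mem_primeFactors hp
    have h1 : p ^ v.factorization p ≤ v := Nat.ordProj_le p (by omega)
    have h2 : 2 ^ v.factorization p ≤ n :=
      le_trans (le_trans (Nat.pow_le_pow_left hpprime.two_le _) h1) hvn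
    exact (Nat.le_log_iff_pow_le (by norm_num) (by omega)).mpr h2
  · intro v hv w hw hvw
    rw [key v hv, key w hw]
    apply Finset.prod_congr rfl
    intro p hp
    have := congrFun (congrFun hvw p) hp
    simp only at this
    rw [this]

lemma log_le_rpow' (K : ℕ) (hK : 1 ≤ K) (t : ℝ) (ht : 1 ≤ t) :
    Real.log t ≤ 2 * K * t ^ ((1:ℝ) / (2 * K)) := by
  have ht0 : 0 < t := by linarith
  have hKpos : (0:ℝ) < 2 * K := by positivity
  set u := t ^ ((1:ℝ) / (2 * K)) with hu
  have hu0 : 0 < u := Real.rpow_pos_of_pos ht0 _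
  have hlogu : Real.log u = (1 / (2*K)) * Real.log t := Real.log_rpow ht0 _
  have h2 : Real.log u ≤ u - 1 := Real.log_le_sub_one_of_pos hu0
  have : Real.log t = 2 * K * Real.log u := by
    rw [hlogu]; field_simp
  rw [this]
  nlinarith [hu0]

lemma log_pow_bound (K : ℕ) (hK : 1 ≤ K) (z x : ℝ) (hz : 3 ≤ z) (hx : z < x) :
    (Real.log x) ^ K ≤ (2*K+1)^K * (Real.log z)^K * (Real.sqrt x / Real.sqrt z) := by
  have hz0 : 0 < z := by linarith
  have hx0 : 0 < x := by linarith
  have ht1 : 1 ≤ x / z := (one_le_div hz0).mpr hx.le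
  have hlz := one_le_log z hz
  have h1 : Real.log x = Real.log z + Real.log (x / z) := by
    rw [Real.log_div (by positivity) (by positivity)]; ring
  have h2 := log_le_rpow' K hK (x/z) ht1
  have hr1 : 1 ≤ (x/z) ^ ((1:ℝ)/(2*K)) := Real.one_le_rpow ht1 (by positivity)
  set u := (x/z) ^ ((1:ℝ)/(2*K)) with hu
  have h3 : Real.log x ≤ (2*K+1) * Real.log z * u := by
    rw [h1]
    have e1 : Real.log z ≤ Real.log z * u := le_mul_of_one_le_right (by linarith) hr1
    have e2 : 2*(K:ℝ)*u ≤ 2*K*Real.log z*u := by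
      have : (0:ℝ) ≤ 2*K*u := by positivity
      nlinarith
    nlinarith
  have hlx : (0:ℝ) ≤ Real.log x := by
    have := one_le_log x (by linarith); linarith
  have h4 : (Real.log x)^K ≤ ((2*K+1) * Real.log z * u)^K :=
    pow_le_pow_left₀ hlx h3 K
  calc (Real.log x)^K ≤ ((2*K+1) * Real.log z * u)^K := h4
  _ = (2*K+1)^K * (Real.log z)^K * u^K := by rw [mul_pow, mul_pow]
  _ = (2*K+1)^K * (Real.log z)^K * (Real.sqrt x / Real.sqrt z) := by
      congr 1
      rw [hu, ← Real.rpow_natCast ((x/z) ^ ((1:ℝ)/(2*K))) K, ← Real.rpow_mul (by positivity)]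
      have hKne : (K:ℝ) ≠ 0 := by positivity
      have he : (1:ℝ)/(2*K) * K = 1/2 := by field_simp
      rw [he, ← Real.sqrt_eq_rpow, Real.sqrt_div hx0.le z]

lemma telescope_Ico (f : ℕ → ℝ) (a : ℕ) : ∀ b, a ≤ b →
    ∑ n ∈ Finset.Ico a b, (f n - f (n+1)) = f a - f b := by
  intro b
  induction b with
  | zero => intro h; simp [Nat.le_zero.mp h]
  | succ b ih =>
    intro h
    rcases Nat.lt_or_ge a (b+1) with h' | h'
    · have hab : a ≤ b := by omega
      rw [Finset.sum_Ico_succ_top hab, ih hab]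
      ring
    · have : a = b + 1 := by omega
      simp [this]

lemma sqrt_step (M : ℕ) (hM : 2 ≤ M) :
    ((M:ℝ) * Real.sqrt M)⁻¹ ≤ 2 / Real.sqrt ((M:ℝ) - 1) - 2 / Real.sqrt M := by
  set x := Real.sqrt ((M:ℝ) - 1) with hx
  set y := Real.sqrt (M:ℝ) with hy
  have hM1 : (1:ℝ) ≤ (M:ℝ) - 1 := by
    have : (2:ℝ) ≤ (M:ℝ) := by exact_mod_cast hM
    linarith
  have hx1 : 1 ≤ x := by
    have h1 : Real.sqrt 1 ≤ Real.sqrt ((M:ℝ) - 1) := Real.sqrt_le_sqrt hM1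
    rw [Real.sqrt_one] at h1
    exact h1
  have hxy : x ≤ y := Real.sqrt_le_sqrt (by linarith)
  have hx2 : x^2 = (M:ℝ) - 1 := Real.sq_sqrt (by linarith)
  have hy2 : y^2 = (M:ℝ) := Real.sq_sqrt (by positivity)
  have hx0 : 0 < x := by linarith
  have hy0 : 0 < y := by linarith
  rw [div_sub_div _ _ (by positivity) (by positivity), ← hy2]
  rw [inv_eq_one_div, div_le_div_iff₀ (by positivity) (by positivity)]
  nlinarith [sq_nonneg (y - x), mul_pos hx0 hy0]

lemma sqrt_sum (a : ℕ) (ha : 2 ≤ a) (M : ℕ) :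
    (∑ n ∈ Finset.Ico a M, ((n:ℝ) * Real.sqrt n)⁻¹) ≤ 2 / Real.sqrt ((a:ℝ) - 1) := by
  rcases Nat.lt_or_ge M a with h | h
  · rw [Finset.Ico_eq_empty (by omega)]
    simp
    positivity
  · have key : ∀ m, a ≤ m → (∑ n ∈ Finset.Ico a m, ((n:ℝ) * Real.sqrt n)⁻¹)
        ≤ 2 / Real.sqrt ((a:ℝ) - 1) - 2 / Real.sqrt ((m:ℝ) - 1) := by
      intro m hm
      induction m, hm using Nat.le_induction with
      | base => simp
      | succ m hm ih =>
        rw [Finset.sum_Ico_succ_top hm]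
        have hs := sqrt_step m (by omega)
        have : ((m:ℝ) + 1) - 1 = (m:ℝ) := by ring
        push_cast
        rw [this]
        push_cast at ih
        linarith
    have := key M h
    have h2 : 0 ≤ 2 / Real.sqrt ((M:ℝ) - 1) := by positivity
    linarith

lemma mini (t : Finset ℕ) (M : ℕ) (g : ℕ → ℝ) :
    ∑ v ∈ t, ∑ n ∈ Finset.Ico v (M+1), g n
      = ∑ n ∈ Finset.range (M+1), ((t.filter (fun v => v ≤ n)).card : ℝ) * g n := by
  classical
  have h1 : ∀ v ∈ t, ∑ n ∈ Finset.Ico v (M+1), g n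
      = ∑ n ∈ Finset.range (M+1), if v ≤ n then g n else 0 := by
    intro v hv
    have he : Finset.Ico v (M+1) = (Finset.range (M+1)).filter (fun n => v ≤ n) := by
      ext n
      simp only [Finset.mem_Ico, Finset.mem_range, Finset.mem_filter]
      omega
    rw [he, Finset.sum_filter]
  rw [Finset.sum_congr rfl h1, Finset.sum_comm]
  apply Finset.sum_congr rfl
  intro n _
  rw [← Finset.sum_filter, Finset.sum_const, nsmul_eq_mul]

lemma m2 (A L sz sn nn : ℝ) (h : sn*sn = nn) (hsz : 0 < sz) (hsn : 0 < sn) (hnn : 0 < nn) :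
    (A * L * (sn / sz)) * (nn^2)⁻¹ = (A * L / sz) * (nn * sn)⁻¹ := by
  field_simp
  linear_combination (A*L) * h

lemma m4 (A L sz s2 : ℝ) (hsz : sz ≠ 0) (hs2 : s2 ≠ 0) :
    (A * L / sz) * (2 / s2) = 2 * (A * L) / (sz * s2) := by
  field_simp

lemma m5 (X z : ℝ) (hz : z ≠ 0) : 2 * X / (z/2) = 4 * X / z := by
  field_simp
  ring

lemma m3 (L sz sM : ℝ) (hL : 0 ≤ L) (hsz : 0 < sz) (hszM : sz ≤ sM) :
    L * (sM/sz) * (sM*sM)⁻¹ ≤ L / (sz*sz) := by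
  have hsM : 0 < sM := lt_of_lt_of_le hsz hszM
  rw [div_eq_mul_inv L]
  have key : (sM/sz) * (sM*sM)⁻¹ ≤ (sz*sz)⁻¹ := by
    have h1 : (sM/sz) * (sM*sM)⁻¹ = (sz*sM)⁻¹ := by
      field_simp
    rw [h1]
    apply inv_anti₀ (by positivity)
    nlinarith
  calc L * (sM/sz) * (sM*sM)⁻¹ = L * ((sM/sz) * (sM*sM)⁻¹) := by ring
  _ ≤ L * (sz*sz)⁻¹ := mul_le_mul_of_nonneg_left key hL

set_option maxHeartbeats 2000000 in
theorem smooth_tail_sum_bound (d : ℕ) (hd : 2 ≤ d) :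
    ∃ C : ℝ, ∀ z : ℝ, 3 ≤ z →
      (∑' v : ℕ, if (z < (v : ℝ)) ∧ ∀ q : ℕ, q.Prime → q ∣ v → q ∣ d then (v : ℝ)⁻¹ else 0)
        ≤ C * (Real.log z) ^ d.primeFactors.card / z := by
  classical
  set K := d.primeFactors.card with hKdef
  have hK1 : 1 ≤ K :=
    Finset.card_pos.mpr (Nat.nonempty_primeFactors.mpr (by omega))
  set A : ℝ := (3*(2*(K:ℝ)+1))^K with hAdef
  have hA0 : 0 < A := by positivity
  refine ⟨8 * A, ?_⟩
  intro z hz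
  have hz0 : 0 < z := by linarith
  have hlz : 1 ≤ Real.log z := one_le_log z hz
  have hRHS0 : 0 ≤ 8 * A * Real.log z ^ K / z := by positivity
  apply tsum_le_of_sum_le' hRHS0
  intro s
  rw [← Finset.sum_filter]
  set t := s.filter (fun v : ℕ => (z < (v : ℝ)) ∧ ∀ q : ℕ, q.Prime → q ∣ v → q ∣ d) with htdef
  rcases Finset.eq_empty_or_nonempty t with hte | hne
  · rw [hte, Finset.sum_empty]; positivity
  have hmem : ∀ v ∈ t, (z < (v:ℝ)) ∧ ∀ q : ℕ, q.Prime → q ∣ v → q ∣ d := by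
    intro v hv
    exact (Finset.mem_filter.mp hv).2
  set M := t.max' hne with hMdef
  have hMt : M ∈ t := t.max'_mem hne
  have hzM : z < (M:ℝ) := (hmem M hMt).1
  have hM4 : 4 ≤ M := by
    have h3 : (3:ℝ) < (M:ℝ) := lt_of_le_of_lt hz hzM
    have : 3 < M := by exact_mod_cast h3
    omega
  have hvle : ∀ v ∈ t, v ≤ M := fun v hv => t.le_max' v hv
  set a := ⌊z⌋₊ + 1 with hadef
  have hza : z < (a:ℝ) := by
    have := Nat.lt_succ_floor z
    push_cast at this ⊢
    exact_mod_cast this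
  have ha4 : 4 ≤ a := by
    have h3 : 3 ≤ ⌊z⌋₊ := Nat.le_floor (by exact_mod_cast hz)
    omega
  have hvge : ∀ v : ℕ, z < (v:ℝ) → a ≤ v := by
    intro v hv
    have : ⌊z⌋₊ < v := (Nat.floor_lt hz0.le).mpr hv
    omega
  set B : ℝ := A * Real.log z ^ K / Real.sqrt z with hBdef
  have hB0 : 0 ≤ B := by positivity
  -- counting bound
  have hcount : ∀ n : ℕ, z < (n:ℝ) →
      ((t.filter (fun v => v ≤ n)).card : ℝ) ≤ A * Real.log z ^ K * (Real.sqrt n / Real.sqrt z) := by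
    intro n hn
    have hn4 : 4 ≤ n := by
      have h3 : (3:ℝ) < (n:ℝ) := lt_of_le_of_lt hz hn
      have : 3 < n := by exact_mod_cast h3
      omega
    have hsub : t.filter (fun v => v ≤ n) ⊆
        (Finset.Icc 1 n).filter (fun v => ∀ q : ℕ, q.Prime → q ∣ v → q ∣ d) := by
      intro v hv
      simp only [Finset.mem_filter] at hv ⊢
      obtain ⟨hvt, hvn⟩ := hv
      have hc := hmem v hvt
      refine ⟨Finset.mem_Icc.mpr ⟨?_, hvn⟩, hc.2⟩
      have h0 : (0:ℝ) < (v:ℝ) := lt_trans hz0 hc.1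
      have : 0 < v := by exact_mod_cast h0
      omega
    have h1 : (t.filter (fun v => v ≤ n)).card ≤ (Nat.log 2 n + 1) ^ K :=
      le_trans (Finset.card_le_card hsub) (count_smooth d hd n)
    have h2 : ((Nat.log 2 n + 1 : ℕ) : ℝ) ≤ 3 * Real.log n := by
      have hL : (2:ℕ) ^ (Nat.log 2 n) ≤ n := Nat.pow_log_le_self 2 (by omega)
      have hLr : ((2:ℝ)) ^ (Nat.log 2 n) ≤ (n:ℝ) := by exact_mod_cast hL
      have hlog2 : (Nat.log 2 n : ℝ) * Real.log 2 ≤ Real.log n := by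
        rw [← Real.log_pow]
        exact Real.log_le_log (by positivity) hLr
      have hl2 : (0.6931471803:ℝ) < Real.log 2 := Real.log_two_gt_d9
      have hlogn : 1 ≤ Real.log n :=
        one_le_log n (by exact_mod_cast (show (3:ℕ) ≤ n by omega))
      push_cast
      nlinarith [mul_nonneg (Nat.cast_nonneg (Nat.log 2 n)) (le_of_lt (sub_pos.mpr hl2))]
    calc ((t.filter (fun v => v ≤ n)).card : ℝ)
        ≤ (((Nat.log 2 n + 1) ^ K : ℕ) : ℝ) := by exact_mod_cast h1
    _ = ((Nat.log 2 n + 1 : ℕ) : ℝ) ^ K := by push_cast; ring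
    _ ≤ (3 * Real.log n) ^ K := pow_le_pow_left₀ (by positivity) h2 K
    _ = 3^K * (Real.log n)^K := by rw [mul_pow]
    _ ≤ 3^K * ((2*K+1)^K * (Real.log z)^K * (Real.sqrt n / Real.sqrt z)) := by
        apply mul_le_mul_of_nonneg_left (log_pow_bound K hK1 z n hz hn) (by positivity)
    _ = A * Real.log z ^ K * (Real.sqrt n / Real.sqrt z) := by
        rw [hAdef, mul_pow]; ring
  -- decomposition
  have decomp : ∀ v ∈ t, ((v:ℝ))⁻¹
      = ((M:ℝ)+1)⁻¹ + ∑ n ∈ Finset.Ico v (M+1), ((n:ℝ)⁻¹ - ((n:ℝ)+1)⁻¹) := by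
    intro v hv
    have hvM : v ≤ M := hvle v hv
    have htel := telescope_Ico (fun n => ((n:ℝ))⁻¹) v (M+1) (by omega)
    push_cast at htel
    rw [htel]
    ring
  have sumsplit : ∑ v ∈ t, ((v:ℝ))⁻¹
      = (t.card : ℝ) * ((M:ℝ)+1)⁻¹
        + ∑ v ∈ t, ∑ n ∈ Finset.Ico v (M+1), ((n:ℝ)⁻¹ - ((n:ℝ)+1)⁻¹) := by
    rw [Finset.sum_congr rfl decomp, Finset.sum_add_distrib, Finset.sum_const,
      nsmul_eq_mul]
  -- bound the double sum
  have hdouble : ∑ v ∈ t, ∑ n ∈ Finset.Ico v (M+1), ((n:ℝ)⁻¹ - ((n:ℝ)+1)⁻¹)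
      ≤ B * (2 / Real.sqrt ((a:ℝ) - 1)) := by
    rw [mini t M (fun n => ((n:ℝ)⁻¹ - ((n:ℝ)+1)⁻¹))]
    have hreduce : ∑ n ∈ Finset.range (M+1),
          ((t.filter (fun v => v ≤ n)).card : ℝ) * ((n:ℝ)⁻¹ - ((n:ℝ)+1)⁻¹)
        = ∑ n ∈ Finset.Ico a (M+1),
          ((t.filter (fun v => v ≤ n)).card : ℝ) * ((n:ℝ)⁻¹ - ((n:ℝ)+1)⁻¹) := by
      symm
      apply Finset.sum_subset
      · intro n hn
        rw [Finset.mem_Ico] at hn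
        exact Finset.mem_range.mpr hn.2
      · intro n hn hn2
        rw [Finset.mem_range] at hn
        rw [Finset.mem_Ico] at hn2
        have hna : n < a := by omega
        have hemp : t.filter (fun v => v ≤ n) = ∅ := by
          rw [Finset.filter_eq_empty_iff]
          intro v hv hvn
          have := hvge v (hmem v hv).1
          omega
        rw [hemp]
        simp
    rw [hreduce]
    have hterm : ∀ n ∈ Finset.Ico a (M+1),
        ((t.filter (fun v => v ≤ n)).card : ℝ) * ((n:ℝ)⁻¹ - ((n:ℝ)+1)⁻¹)
          ≤ B * ((n:ℝ) * Real.sqrt n)⁻¹ := by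
      intro n hn
      rw [Finset.mem_Ico] at hn
      have hzn : z < (n:ℝ) := lt_of_lt_of_le hza (by exact_mod_cast hn.1)
      have hn0 : (0:ℝ) < (n:ℝ) := lt_trans hz0 hzn
      have hc := hcount n hzn
      have hs : Real.sqrt n * Real.sqrt n = (n:ℝ) := Real.mul_self_sqrt hn0.le
      have hsn0 : 0 < Real.sqrt n := Real.sqrt_pos.mpr hn0
      have hsz0 : 0 < Real.sqrt z := Real.sqrt_pos.mpr hz0
      have hg0 : 0 ≤ ((n:ℝ)⁻¹ - ((n:ℝ)+1)⁻¹) := by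
        have : ((n:ℝ)+1)⁻¹ ≤ (n:ℝ)⁻¹ := by
          apply inv_anti₀ hn0
          linarith
        linarith
      have hg : ((n:ℝ)⁻¹ - ((n:ℝ)+1)⁻¹) ≤ (((n:ℝ))^2)⁻¹ := by
        rw [inv_sub_inv hn0.ne' (by positivity)]
        rw [show ((n:ℝ)+1) - n = 1 by ring]
        rw [div_le_iff₀ (by positivity)]
        rw [inv_mul_eq_div, le_div_iff₀ (by positivity)]
        nlinarith
      calc ((t.filter (fun v => v ≤ n)).card : ℝ) * ((n:ℝ)⁻¹ - ((n:ℝ)+1)⁻¹)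
          ≤ (A * Real.log z ^ K * (Real.sqrt n / Real.sqrt z)) * (((n:ℝ))^2)⁻¹ := by
            apply mul_le_mul hc hg hg0 (by positivity)
      _ = B * ((n:ℝ) * Real.sqrt n)⁻¹ :=
          m2 A (Real.log z ^ K) (Real.sqrt z) (Real.sqrt n) (n:ℝ) hs hsz0 hsn0 hn0
    calc ∑ n ∈ Finset.Ico a (M+1),
          ((t.filter (fun v => v ≤ n)).card : ℝ) * ((n:ℝ)⁻¹ - ((n:ℝ)+1)⁻¹)
        ≤ ∑ n ∈ Finset.Ico a (M+1), B * ((n:ℝ) * Real.sqrt n)⁻¹ :=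
          Finset.sum_le_sum hterm
    _ = B * ∑ n ∈ Finset.Ico a (M+1), ((n:ℝ) * Real.sqrt n)⁻¹ := by
        rw [Finset.mul_sum]
    _ ≤ B * (2 / Real.sqrt ((a:ℝ) - 1)) :=
        mul_le_mul_of_nonneg_left (sqrt_sum a (by omega) (M+1)) hB0
  -- boundary term
  have hbdry : (t.card : ℝ) * ((M:ℝ)+1)⁻¹ ≤ A * Real.log z ^ K / z := by
    have hfil : t.filter (fun v => v ≤ M) = t := Finset.filter_true_of_mem hvle
    have hcM := hcount M hzM
    rw [hfil] at hcM
    have hM0 : (0:ℝ) < (M:ℝ) := lt_trans hz0 hzM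
    have hsz0 : 0 < Real.sqrt z := Real.sqrt_pos.mpr hz0
    have hsz2 : Real.sqrt z * Real.sqrt z = z := Real.mul_self_sqrt hz0.le
    have hsM2 : Real.sqrt M * Real.sqrt M = (M:ℝ) := Real.mul_self_sqrt hM0.le
    have hszM : Real.sqrt z ≤ Real.sqrt M := Real.sqrt_le_sqrt hzM.le
    have step1 : (t.card : ℝ) * ((M:ℝ)+1)⁻¹
        ≤ (A * Real.log z ^ K * (Real.sqrt M / Real.sqrt z)) * ((M:ℝ))⁻¹ := by
      apply mul_le_mul hcM _ (by positivity) (by positivity)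
      apply inv_anti₀ hM0
      linarith
    calc (t.card : ℝ) * ((M:ℝ)+1)⁻¹
        ≤ (A * Real.log z ^ K * (Real.sqrt M / Real.sqrt z)) * ((M:ℝ))⁻¹ := step1
    _ = (A * Real.log z ^ K) * (Real.sqrt M / Real.sqrt z)
          * (Real.sqrt M * Real.sqrt M)⁻¹ := by rw [hsM2]
    _ ≤ (A * Real.log z ^ K) / (Real.sqrt z * Real.sqrt z) :=
        m3 (A * Real.log z ^ K) (Real.sqrt z) (Real.sqrt M) (by positivity) hsz0 hszM
    _ = A * Real.log z ^ K / z := by rw [hsz2]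
  -- tail sum bound
  have htail : B * (2 / Real.sqrt ((a:ℝ) - 1)) ≤ 4 * (A * Real.log z ^ K) / z := by
    have hfl : z - 1 < (⌊z⌋₊ : ℝ) := Nat.sub_one_lt_floor z
    have h1 : z/2 ≤ (a:ℝ) - 1 := by
      have : ((a:ℝ) : ℝ) - 1 = (⌊z⌋₊ : ℝ) := by
        rw [hadef]; push_cast; ring
      rw [this]
      linarith
    have hz2 : (0:ℝ) < z/2 := by linarith
    have h2 : Real.sqrt (z/2) ≤ Real.sqrt ((a:ℝ)-1) := Real.sqrt_le_sqrt h1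
    have h2' : 0 < Real.sqrt (z/2) := Real.sqrt_pos.mpr hz2
    have hsz0 : 0 < Real.sqrt z := Real.sqrt_pos.mpr hz0
    have h3 : z/2 ≤ Real.sqrt z * Real.sqrt (z/2) := by
      rw [← Real.sqrt_mul hz0.le]
      have h4 : z/2 = Real.sqrt ((z/2)^2) := (Real.sqrt_sq hz2.le).symm
      rw [h4]
      apply Real.sqrt_le_sqrt
      nlinarith
    calc B * (2 / Real.sqrt ((a:ℝ) - 1))
        ≤ B * (2 / Real.sqrt (z/2)) := by
          have hd2 : 2 / Real.sqrt ((a:ℝ)-1) ≤ 2 / Real.sqrt (z/2) :=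
            div_le_div_of_nonneg_left (by norm_num) h2' h2
          exact mul_le_mul_of_nonneg_left hd2 hB0
    _ = 2 * (A * Real.log z ^ K) / (Real.sqrt z * Real.sqrt (z/2)) := by
        rw [hBdef]
        exact m4 A (Real.log z ^ K) (Real.sqrt z) (Real.sqrt (z/2)) hsz0.ne' h2'.ne'
    _ ≤ 2 * (A * Real.log z ^ K) / (z/2) := by
        apply div_le_div_of_nonneg_left (by positivity) hz2 h3
    _ = 4 * (A * Real.log z ^ K) / z := m5 (A * Real.log z ^ K) z hz0.ne'
  -- put everything together
  rw [sumsplit]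
  have hfin : 0 ≤ A * Real.log z ^ K / z := by positivity
  have : 8 * A * Real.log z ^ K / z
      = A * Real.log z ^ K / z + 4 * (A * Real.log z ^ K) / z
        + 3 * (A * Real.log z ^ K / z) := by ring
  rw [this]
  linarith [hdouble, hbdry, htail]
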